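/- Let G be a finite simple graph, v a vertex of G, and let c be a degenerate coloring of the vertex-deleted subgraph G − v. If the neighbors of v in G receive pairwise distinct colors under c, and v is colored with a color different from the colors of all its neighbors, then the resulting coloring of G is a degenerate coloring of G. -/

import Mathlib

/-- A proper coloring: adjacent vertices receive different colors. -/
def IsProperColoring {V : Type*} (G : SimpleGraph V) (f : V → ℕ) : Prop :=
  ∀ ⦃x y⦄, G.Adj x y → f x ≠ f y

/-- A degenerate coloring: a proper coloring such that for every `k ≥ 1` the union of any
`k` color classes induces a `k`-degenerate subgraph. -/
def IsDegenerateColoring {V : Type*} (G : SimpleGraph V) (f : V → ℕ) : Prop :=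
  IsProperColoring G f ∧
  ∀ k : ℕ, 1 ≤ k → ∀ S : Finset ℕ, S.card = k →
    ∀ W : Set V, W.Finite → W.Nonempty → (∀ v ∈ W, f v ∈ S) →
      ∃ v ∈ W, {u ∈ W | G.Adj v u}.ncard < k

/-- Observation 6: if `c` restricted to the vertex-deleted subgraph `G - v` is a degenerate
coloring, the neighbors of `v` receive pairwise distinct colors, and `v` gets a color
different from all colors of its neighbors, then `c` is a degenerate coloring of `G`. -/
theorem stmt5 {V : Type*} [Fintype V] (G : SimpleGraph V) (v : V) (c : V → ℕ)
    (hdel : IsDegenerateColoring (G.induce {u : V | u ≠ v}) (fun u => c u.val))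
    (hnbr : ∀ u w : V, G.Adj v u → G.Adj v w → u ≠ w → c u ≠ c w)
    (hv : ∀ u : V, G.Adj v u → c v ≠ c u) :
    IsDegenerateColoring G c := by
  classical
  obtain ⟨hprop, hdeg⟩ := hdel
  constructor
  · intro x y hxy
    by_cases hx : x = v
    · subst hx; exact hv y hxy
    · by_cases hy : y = v
      · subst hy; exact fun h => hv x hxy.symm h.symm
      · exact hprop (x := ⟨x, hx⟩) (y := ⟨y, hy⟩) hxy
  · intro k hk S hS W hWfin hWne hWcol
    by_cases hvW : v ∈ W
    · refine ⟨v, hvW, ?_⟩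
      set N : Set V := {u ∈ W | G.Adj v u} with hN
      have hNfin : N.Finite := hWfin.subset (fun u hu => hu.1)
      have hinj : Set.InjOn c N := by
        intro a ha b hb hab
        by_contra hne
        exact hnbr a b ha.2 hb.2 hne hab
      have himsub : c '' N ⊆ ↑(S.erase (c v)) := by
        rintro x ⟨a, ha, rfl⟩
        simp only [Finset.coe_erase, Set.mem_diff, Set.mem_singleton_iff]
        exact ⟨hWcol a ha.1, fun h => hv a ha.2 h.symm⟩
      have h1 : N.ncard = (c '' N).ncard := (Set.ncard_image_of_injOn hinj).symm
      have h2 : (c '' N).ncard ≤ (S.erase (c v)).card := by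
        have := Set.ncard_le_ncard himsub (Finset.finite_toSet _)
        rwa [Set.ncard_coe_finset] at this
      have h3 : (S.erase (c v)).card < S.card :=
        Finset.card_erase_lt_of_mem (hWcol v hvW)
      omega
    · -- v ∉ W : lift to the induced subgraph
      set W' : Set {u : V | u ≠ v} := {u | u.val ∈ W} with hW'
      have hW'fin : W'.Finite := Set.toFinite _
      have hW'ne : W'.Nonempty := by
        obtain ⟨w, hw⟩ := hWne
        exact ⟨⟨w, fun h => hvW (h ▸ hw)⟩, hw⟩
      have hW'col : ∀ u ∈ W', c u.val ∈ S := fun u hu => hWcol u.val hu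
      obtain ⟨w, hwW', hwcard⟩ := hdeg k hk S hS W' hW'fin hW'ne hW'col
      refine ⟨w.val, hwW', ?_⟩
      have heq : {u ∈ W | G.Adj w.val u} =
          Subtype.val '' {u ∈ W' | (G.induce {u : V | u ≠ v}).Adj w u} := by
        ext u
        constructor
        · intro ⟨huW, hadj⟩
          have hune : u ≠ v := fun h => hvW (h ▸ huW)
          exact ⟨⟨u, hune⟩, ⟨huW, hadj⟩, rfl⟩
        · rintro ⟨a, ⟨haW, hadj⟩, rfl⟩
          exact ⟨haW, hadj⟩
      rw [heq, Set.ncard_image_of_injective _ Subtype.val_injective]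
      exact hwcard
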